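/- Let 𝓛 be a nest on a complex separable Hilbert space H and let T be a bounded operator on H of rank n (its range is an n-dimensional subspace). Then the kernel set Ω_T = {(φ_T(M), Ψ_T(M)) : M ∈ 𝓛} has cardinality at most n + 1. -/

import Mathlib

open scoped InnerProductSpace

variable {H : Type*} [NormedAddCommGroup H] [InnerProductSpace ℂ H]
  [CompleteSpace H] [TopologicalSpace.SeparableSpace H]

/-- A subspace lattice on `H`: a set of closed subspaces containing `⊥` and `⊤`,
closed under arbitrary intersections and closed linear spans. -/
def IsSubspaceLattice (𝓛 : Set (Submodule ℂ H)) : Prop :=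
  (∀ M ∈ 𝓛, IsClosed (M : Set H)) ∧ ⊥ ∈ 𝓛 ∧ ⊤ ∈ 𝓛 ∧
  (∀ S ⊆ 𝓛, sInf S ∈ 𝓛) ∧ (∀ S ⊆ 𝓛, (sSup S).topologicalClosure ∈ 𝓛)

/-- A nest: a totally ordered subspace lattice. -/
def IsNest (𝓛 : Set (Submodule ℂ H)) : Prop :=
  IsSubspaceLattice 𝓛 ∧ ∀ M ∈ 𝓛, ∀ N ∈ 𝓛, M ≤ N ∨ N ≤ M

/-- A continuous nest. -/
def IsContinuousNest (𝓛 : Set (Submodule ℂ H)) : Prop :=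
  IsNest 𝓛 ∧ ∀ M ∈ 𝓛, M = (sSup {N ∈ 𝓛 | N < M}).topologicalClosure

/-- `M_x`: the intersection of all members of `𝓛` containing `x`. -/
noncomputable def Mx (𝓛 : Set (Submodule ℂ H)) (x : H) : Submodule ℂ H :=
  sInf {M ∈ 𝓛 | x ∈ M}

/-- `M̂_x`: the closed span of all members of `𝓛` orthogonal to `x`. -/
noncomputable def Mhat (𝓛 : Set (Submodule ℂ H)) (x : H) : Submodule ℂ H :=
  (sSup {M ∈ 𝓛 | ∀ v ∈ M, inner ℂ x v = (0 : ℂ)}).topologicalClosure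

/-- `φ_T(M)`: the closed span of all members `M'` of `𝓛` with `T(M') ⊆ M`. -/
noncomputable def phiT (𝓛 : Set (Submodule ℂ H)) (T : H →L[ℂ] H) (M : Submodule ℂ H) :
    Submodule ℂ H :=
  (sSup {M' ∈ 𝓛 | ∀ v ∈ M', T v ∈ M}).topologicalClosure

/-- `Ψ_T(M)`: the intersection of all `M' ∈ 𝓛` with `φ_T(M') = φ_T(M)`. -/
noncomputable def PsiT (𝓛 : Set (Submodule ℂ H)) (T : H →L[ℂ] H) (M : Submodule ℂ H) :
    Submodule ℂ H :=
  sInf {M' ∈ 𝓛 | phiT 𝓛 T M' = phiT 𝓛 T M}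

/-- `σ_T(M)`: the closed span of all `M' ∈ 𝓛` with `φ_T(M') = φ_T(M)`. -/
noncomputable def sigmaT (𝓛 : Set (Submodule ℂ H)) (T : H →L[ℂ] H) (M : Submodule ℂ H) :
    Submodule ℂ H :=
  (sSup {M' ∈ 𝓛 | phiT 𝓛 T M' = phiT 𝓛 T M}).topologicalClosure

/-- The kernel map `ω_T`. -/
noncomputable def omegaT (𝓛 : Set (Submodule ℂ H)) (T : H →L[ℂ] H) (M : Submodule ℂ H) :
    Submodule ℂ H × Submodule ℂ H :=
  (phiT 𝓛 T M, PsiT 𝓛 T M)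

/-- The rank-one operator `x ⊗ y : z ↦ ⟨z, y⟩ x`. -/
noncomputable def rankOne (x y : H) : H →L[ℂ] H :=
  (innerSL ℂ y).smulRight x

/-- The nest algebra of a subspace lattice. -/
def nestAlg (𝓛 : Set (Submodule ℂ H)) : Set (H →L[ℂ] H) :=
  {T | ∀ M ∈ 𝓛, ∀ v ∈ M, T v ∈ M}

/-- Lie module over the nest algebra. -/
def IsLieModule (𝓛 : Set (Submodule ℂ H)) (𝓜 : Submodule ℂ (H →L[ℂ] H)) : Prop :=
  ∀ A ∈ 𝓜, ∀ T ∈ nestAlg 𝓛, A.comp T - T.comp A ∈ 𝓜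

/-- Orthogonal projection of a vector onto a closed subspace (junk value `0` if not closed). -/
noncomputable def projVec (N : Submodule ℂ H) (z : H) : H := by
  classical
  exact if h : IsClosed (N : Set H) then
    have : CompleteSpace N := h.completeSpace_coe
    (N.orthogonalProjectionOnto z : H)
  else 0


section Aux

variable (𝓛 : Set (Submodule ℂ H)) (T : H →L[ℂ] H)

lemma phiT_le_comap {M : Submodule ℂ H} (hM : IsClosed (M : Set H)) :
    phiT 𝓛 T M ≤ Submodule.comap (T : H →ₗ[ℂ] H) M := by
  apply Submodule.topologicalClosure_minimal
  · apply sSup_le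
    rintro M' ⟨_, h⟩ v hv
    exact h v hv
  · exact hM.preimage T.continuous

lemma phiT_mono {M N : Submodule ℂ H} (h : M ≤ N) : phiT 𝓛 T M ≤ phiT 𝓛 T N := by
  apply Submodule.topologicalClosure_mono
  apply sSup_le_sSup
  rintro M' ⟨h1, h2⟩
  exact ⟨h1, fun v hv => h (h2 v hv)⟩

lemma phiT_eq_of_map_eq (h𝓛 : IsNest 𝓛) {M N : Submodule ℂ H}
    (hM : M ∈ 𝓛) (hN : N ∈ 𝓛) (hle : M ≤ N)
    (hmap : Submodule.map (T : H →ₗ[ℂ] H) (phiT 𝓛 T M)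
      = Submodule.map (T : H →ₗ[ℂ] H) (phiT 𝓛 T N)) :
    phiT 𝓛 T M = phiT 𝓛 T N := by
  have hsets : {M' ∈ 𝓛 | ∀ v ∈ M', T v ∈ M} = {M' ∈ 𝓛 | ∀ v ∈ M', T v ∈ N} := by
    ext M'
    constructor
    · rintro ⟨h1, h2⟩
      exact ⟨h1, fun v hv => hle (h2 v hv)⟩
    · rintro ⟨h1, h2⟩
      refine ⟨h1, fun v hv => ?_⟩
      have hM'le : M' ≤ phiT 𝓛 T N :=
        le_trans (le_sSup (show M' ∈ {M' ∈ 𝓛 | ∀ v ∈ M', T v ∈ N} from ⟨h1, h2⟩))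
          (Submodule.le_topologicalClosure _)
      have : T v ∈ Submodule.map (T : H →ₗ[ℂ] H) (phiT 𝓛 T N) :=
        ⟨v, hM'le hv, rfl⟩
      rw [← hmap] at this
      have hcm : Submodule.map (T : H →ₗ[ℂ] H) (phiT 𝓛 T M) ≤ M :=
        Submodule.map_le_iff_le_comap.2 (phiT_le_comap 𝓛 T (h𝓛.1.1 M hM))
      exact hcm this
  unfold phiT
  rw [hsets]

lemma omegaT_eq_of_phiT_eq {M N : Submodule ℂ H}
    (h : phiT 𝓛 T M = phiT 𝓛 T N) : omegaT 𝓛 T M = omegaT 𝓛 T N := by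
  unfold omegaT PsiT
  rw [h]

end Aux

theorem stmt_10 (𝓛 : Set (Submodule ℂ H)) (h𝓛 : IsNest 𝓛)
    (T : H →L[ℂ] H) (n : ℕ)
    (hfin : FiniteDimensional ℂ (LinearMap.range (T : H →ₗ[ℂ] H)))
    (hrank : Module.finrank ℂ (LinearMap.range (T : H →ₗ[ℂ] H)) = n) :
    Set.encard {p : Submodule ℂ H × Submodule ℂ H | ∃ M ∈ 𝓛, omegaT 𝓛 T M = p}
      ≤ (n + 1 : ℕ∞) := by
  classical
  set g : Submodule ℂ H → ℕ :=
    fun M => Module.finrank ℂ (Submodule.map (T : H →ₗ[ℂ] H) (phiT 𝓛 T M)) with hg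
  have hrange : ∀ M : Submodule ℂ H,
      Submodule.map (T : H →ₗ[ℂ] H) (phiT 𝓛 T M) ≤ LinearMap.range (T : H →ₗ[ℂ] H) :=
    fun M => LinearMap.map_le_range
  have hfin' : FiniteDimensional ℂ (LinearMap.range (T : H →ₗ[ℂ] H)) := hfin
  have hgle : ∀ M : Submodule ℂ H, g M ≤ n := by
    intro M
    rw [← hrank]
    exact Submodule.finrank_mono (hrange M)
  -- key: equal g-values along the nest give equal omegaT-values
  have key : ∀ M ∈ 𝓛, ∀ N ∈ 𝓛, g M = g N → omegaT 𝓛 T M = omegaT 𝓛 T N := by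
    have main : ∀ M ∈ 𝓛, ∀ N ∈ 𝓛, M ≤ N → g M = g N →
        omegaT 𝓛 T M = omegaT 𝓛 T N := by
      intro M hM N hN hle hgeq
      have h1 : Submodule.map (T : H →ₗ[ℂ] H) (phiT 𝓛 T M)
          ≤ Submodule.map (T : H →ₗ[ℂ] H) (phiT 𝓛 T N) :=
        Submodule.map_mono (phiT_mono 𝓛 T hle)
      haveI : FiniteDimensional ℂ (Submodule.map (T : H →ₗ[ℂ] H) (phiT 𝓛 T N)) :=
        Submodule.finiteDimensional_of_le (hrange N)
      have hmap := Submodule.eq_of_le_of_finrank_eq h1 hgeq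
      exact omegaT_eq_of_phiT_eq 𝓛 T (phiT_eq_of_map_eq 𝓛 T h𝓛 hM hN hle hmap)
    intro M hM N hN hgeq
    rcases h𝓛.2 M hM N hN with h | h
    · exact main M hM N hN h hgeq
    · exact (main N hN M hM h hgeq.symm).symm
  -- construct a factoring map F : ℕ → pairs
  have hF : ∃ F : ℕ → Submodule ℂ H × Submodule ℂ H,
      ∀ M ∈ 𝓛, F (g M) = omegaT 𝓛 T M := by
    refine ⟨fun k => if h : ∃ M ∈ 𝓛, g M = k then omegaT 𝓛 T h.choose else (⊥, ⊥), ?_⟩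
    intro M hM
    have hex : ∃ M' ∈ 𝓛, g M' = g M := ⟨M, hM, rfl⟩
    simp only [dif_pos hex]
    exact key _ hex.choose_spec.1 M hM hex.choose_spec.2
  obtain ⟨F, hFspec⟩ := hF
  have hsub : {p : Submodule ℂ H × Submodule ℂ H | ∃ M ∈ 𝓛, omegaT 𝓛 T M = p}
      ⊆ F '' (Set.Iic n) := by
    rintro p ⟨M, hM, rfl⟩
    exact ⟨g M, hgle M, hFspec M hM⟩
  calc Set.encard {p : Submodule ℂ H × Submodule ℂ H | ∃ M ∈ 𝓛, omegaT 𝓛 T M = p}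
      ≤ Set.encard (F '' (Set.Iic n)) := Set.encard_le_encard hsub
    _ ≤ Set.encard (Set.Iic n) := Set.encard_image_le _ _
    _ = (n + 1 : ℕ∞) := by
        rw [show (Set.Iic n : Set ℕ) = ↑(Finset.Iic n) by simp,
          Set.encard_coe_eq_coe_finsetCard, Nat.card_Iic]
        simp
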